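/- For every μ ≥ 0 and every y > 0, the series Σ_{n=1}^∞ |ζ_{μ,n}(y)| converges (is finite). -/

import Mathlib

open MeasureTheory ProbabilityTheory Real Filter Set
open scoped ENNReal NNReal Topology

/-- Modified Bessel function of the first kind `I_μ(x)`, defined by its series. -/
noncomputable def besselI (μ x : ℝ) : ℝ :=
  ∑' k : ℕ, (x / 2) ^ (2 * (k : ℝ) + μ) / ((k.factorial : ℝ) * Real.Gamma ((k : ℝ) + μ + 1))

/-- Macdonald function (modified Bessel function of the second kind) `K_μ(x)`. -/
noncomputable def besselK (μ x : ℝ) : ℝ :=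
  ∫ t in Set.Ioi (0 : ℝ), Real.exp (-(x * Real.cosh t)) * Real.cosh (μ * t)

/-- `S_m = 2 π^{(m+1)/2} / Γ((m+1)/2)`, the surface area of the `m`-dimensional unit sphere. -/
noncomputable def sphereArea (m : ℕ) : ℝ :=
  2 * Real.pi ^ (((m : ℝ) + 1) / 2) / Real.Gamma (((m : ℝ) + 1) / 2)

/-- The coefficient `ξ_{μ,n}(y)`. -/
noncomputable def xiCoef (μ : ℝ) (n : ℕ) (y : ℝ) : ℝ :=
  if μ = 0 ∧ n = 0 then besselI 0 y ^ 2 / 2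
  else (-1 : ℝ) ^ n * (μ + n) * Real.Gamma (2 * μ + n) * besselI (μ + n) y ^ 2
    / (n.factorial : ℝ)

/-- The coefficient `ζ_{μ,n}(y)`. -/
noncomputable def zetaCoef (μ : ℝ) (n : ℕ) (y : ℝ) : ℝ :=
  if μ = 0 ∧ n = 0 then besselI 0 y * besselI 1 y / 2
  else (-1 : ℝ) ^ n * (μ + n) * Real.Gamma (2 * μ + n) * besselI (μ + n) y
    * besselI (μ + n + 1) y / (n.factorial : ℝ)

/-- A standard `d`-dimensional Brownian motion on a probability space `(Ω, P)`. -/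
structure IsBrownianMotion {Ω : Type*} [MeasurableSpace Ω] (P : Measure Ω) (d : ℕ)
    (B : ℝ → Ω → EuclideanSpace ℝ (Fin d)) : Prop where
  isProb : IsProbabilityMeasure P
  meas : ∀ t : ℝ, Measurable (B t)
  cont : ∀ᵐ ω ∂P, Continuous fun t : ℝ => B t ω
  init : ∀ᵐ ω ∂P, B 0 ω = 0
  indep_incr : ∀ (n : ℕ) (t : Fin (n + 1) → ℝ), Monotone t → (∀ i, 0 ≤ t i) →
    iIndepFun
      (fun i : Fin n => fun ω => B (t i.succ) ω - B (t i.castSucc) ω) P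
  gauss_coord : ∀ s t : ℝ, 0 ≤ s → s ≤ t → ∀ i : Fin d,
    Measure.map (fun ω => (B t ω - B s ω) i) P = gaussianReal 0 (Real.toNNReal (t - s))
  indep_coord : ∀ s t : ℝ, 0 ≤ s → s ≤ t →
    iIndepFun
      (fun (i : Fin d) (ω : Ω) => (B t ω - B s ω) i) P

/-- Hitting time of the closed ball of radius `r` by the drifted process `B(s)+sv` started
shifted by `x`. -/
noncomputable def hitTime {Ω : Type*} {d : ℕ} (B : ℝ → Ω → EuclideanSpace ℝ (Fin d))
    (v x : EuclideanSpace ℝ (Fin d)) (r : ℝ) (ω : Ω) : ℝ :=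
  sInf {s : ℝ | 0 ≤ s ∧ ‖B s ω + s • v + x‖ ≤ r}

/-- `L_v^d(t) = ∫_{ℝ^d ∖ D} P(τ_v(x) ≤ t) dx`. -/
noncomputable def sausageL {Ω : Type*} [MeasurableSpace Ω] (P : Measure Ω) {d : ℕ}
    (B : ℝ → Ω → EuclideanSpace ℝ (Fin d)) (v : EuclideanSpace ℝ (Fin d)) (r t : ℝ) : ℝ :=
  ∫ x in (Metric.closedBall (0 : EuclideanSpace ℝ (Fin d)) r)ᶜ,
    (P {ω | hitTime B v x r ω ≤ t}).toReal

/-- `Σ_v^m(t) = e^{-|v|² t / 2} L_0^m(t)`, where `L0` stands for `L_0^m`. -/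
noncomputable def sigmaV (vnorm : ℝ) (L0 : ℝ → ℝ) (t : ℝ) : ℝ :=
  Real.exp (-(vnorm ^ 2 * t / 2)) * L0 t

/-- `Σ̃_v^m(t)`. -/
noncomputable def sigmaTilde (vnorm : ℝ) (L0 : ℝ → ℝ) (t : ℝ) : ℝ :=
  sigmaV vnorm L0 t + vnorm ^ 2 * ∫ s in (0:ℝ)..t, sigmaV vnorm L0 s
    + vnorm ^ 4 / 4 * ∫ s in (0:ℝ)..t, (t - s) * sigmaV vnorm L0 s

/-- The function `F_μ(λ)` (depending on `|v|` and `r`). -/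
noncomputable def Fmu (vnorm r μ lam : ℝ) : ℝ :=
  Real.sqrt (2 * lam + vnorm ^ 2) / lam ^ 2
    * besselK (μ + 1) (r * Real.sqrt (2 * lam + vnorm ^ 2))
    / besselK μ (r * Real.sqrt (2 * lam + vnorm ^ 2))

/-- The Gegenbauer polynomial `C_n^μ(x)` for `μ > 0`. -/
noncomputable def gegenbauerC (μ : ℝ) (n : ℕ) (x : ℝ) : ℝ :=
  (1 / Real.Gamma μ) * ∑ m ∈ Finset.range (n / 2 + 1),
    (-1 : ℝ) ^ m * Real.Gamma (μ + n - m) / ((m.factorial : ℝ) * ((n - 2 * m).factorial : ℝ))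
      * (2 * x) ^ (n - 2 * m)

/-- The constant `N_v^d` (as a function of `|v|`), the linear growth rate of the expected
volume of the Wiener sausage with drift. -/
noncomputable def NvD (d : ℕ) (r y : ℝ) : ℝ :=
  if d = 2 then
    Real.pi * besselI 0 (r * y) / besselK 0 (r * y)
      + 2 * Real.pi * ∑' n : ℕ,
        (-1 : ℝ) ^ (n + 1) * besselI ((n : ℝ) + 1) (r * y) / besselK ((n : ℝ) + 1) (r * y)
  else
    Real.pi * sphereArea (d - 2) / y ^ ((d : ℝ) - 2) * ∑' n : ℕ,
      (-1 : ℝ) ^ n * (((d : ℝ) / 2 - 1) + n) * Real.Gamma (2 * ((d : ℝ) / 2 - 1) + n)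
        / (n.factorial : ℝ)
        * besselI (((d : ℝ) / 2 - 1) + n) (r * y) / besselK (((d : ℝ) / 2 - 1) + n) (r * y)

lemma gamma_le_gamma_nat_add {ν : ℝ} (hν : 1 ≤ ν) (k : ℕ) :
    Real.Gamma ν ≤ Real.Gamma (↑k + ν) := by
  induction k with
  | zero => simp
  | succ k ih =>
    have h1 : (0:ℝ) < ↑k + ν := by positivity
    have h2 : Real.Gamma (↑(k+1) + ν) = (↑k + ν) * Real.Gamma (↑k + ν) := by
      rw [show ((k+1:ℕ):ℝ) + ν = (↑k + ν) + 1 by push_cast; ring, Real.Gamma_add_one h1.ne']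
    rw [h2]
    calc Real.Gamma ν ≤ Real.Gamma (↑k+ν) := ih
    _ ≤ (↑k+ν) * Real.Gamma (↑k+ν) :=
      le_mul_of_one_le_left (Real.Gamma_pos_of_pos h1).le (by linarith [Nat.cast_nonneg (α := ℝ) k])

lemma besselI_term_le {ν y : ℝ} (hν : 0 ≤ ν) (hy : 0 < y) (k : ℕ) :
    (y / 2) ^ (2 * (k : ℝ) + ν) / ((k.factorial : ℝ) * Real.Gamma ((k : ℝ) + ν + 1))
      ≤ (y/2) ^ ν / Real.Gamma (ν+1) * (((y/2)^2)^k / (k.factorial : ℝ)) := by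
  have hq : (0:ℝ) < y/2 := by linarith
  have hnum : (y / 2) ^ (2 * (k : ℝ) + ν) = ((y/2)^2)^k * (y/2) ^ ν := by
    rw [Real.rpow_add hq, show (2 * (k:ℝ)) = ((2*k : ℕ) : ℝ) by push_cast; ring,
      Real.rpow_natCast, pow_mul]
  have hΓ : Real.Gamma (ν+1) ≤ Real.Gamma ((k:ℝ) + ν + 1) := by
    have := gamma_le_gamma_nat_add (ν := ν + 1) (by linarith) k
    rwa [← add_assoc] at this
  have hΓ0 : 0 < Real.Gamma (ν+1) := Real.Gamma_pos_of_pos (by linarith)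
  have hrw : (y/2) ^ ν / Real.Gamma (ν+1) * (((y/2)^2)^k / (k.factorial : ℝ))
      = ((y/2)^2)^k * (y/2) ^ ν / ((k.factorial : ℝ) * Real.Gamma (ν+1)) := by
    field_simp
  rw [hnum, hrw]
  gcongr

lemma besselI_nonneg {ν y : ℝ} (hν : 0 ≤ ν) (hy : 0 < y) : 0 ≤ besselI ν y := by
  apply tsum_nonneg
  intro k
  have hq : (0:ℝ) < y/2 := by linarith
  have : 0 < Real.Gamma ((k:ℝ) + ν + 1) := Real.Gamma_pos_of_pos (by positivity)
  positivity

lemma besselI_le {ν y : ℝ} (hν : 0 ≤ ν) (hy : 0 < y) :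
    besselI ν y ≤ (y/2) ^ ν / Real.Gamma (ν+1) * ∑' k : ℕ, ((y/2)^2)^k / (k.factorial : ℝ) := by
  have hq : (0:ℝ) < y/2 := by linarith
  have hsum : Summable fun k : ℕ => ((y/2)^2)^k / (k.factorial : ℝ) :=
    Real.summable_pow_div_factorial _
  have hsum2 : Summable fun k : ℕ => (y/2) ^ ν / Real.Gamma (ν+1) * (((y/2)^2)^k / (k.factorial : ℝ)) :=
    hsum.mul_left _
  have hle := besselI_term_le hν hy
  have hsum1 : Summable fun k : ℕ =>
      (y / 2) ^ (2 * (k : ℝ) + ν) / ((k.factorial : ℝ) * Real.Gamma ((k : ℝ) + ν + 1)) := by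
    apply Summable.of_nonneg_of_le _ hle hsum2
    intro k
    have : 0 < Real.Gamma ((k:ℝ) + ν + 1) := Real.Gamma_pos_of_pos (by positivity)
    positivity
  rw [besselI, ← tsum_mul_left]
  exact Summable.tsum_le_tsum hle hsum1 hsum2

/-- Lemma 2.3, second claim. -/
theorem summable_abs_zetaCoef (μ y : ℝ) (hμ : 0 ≤ μ) (hy : 0 < y) :
    Summable fun n : ℕ => |zetaCoef μ (n + 1) y| := by
  set q : ℝ := y / 2 with hqdef
  have hq : 0 < q := by rw [hqdef]; linarith
  set E : ℝ := ∑' k : ℕ, (q^2)^k / (k.factorial : ℝ) with hEdef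
  have hE : 0 < E := by
    have h0 : (0:ℝ) < (q^2)^0 / ((0:ℕ).factorial : ℝ) := by norm_num
    refine lt_of_lt_of_le h0 ?_
    apply Summable.le_tsum (Real.summable_pow_div_factorial _) 0
    intro k _
    positivity
  -- the dominating sequence
  set b : ℕ → ℝ := fun n =>
    (μ + n + 1) * Real.Gamma (2*μ + n + 1) * (q^2)^n /
      (((n+1).factorial : ℝ) * Real.Gamma (μ + n + 2) * Real.Gamma (μ + n + 3)) with hbdef
  have hΓpos : ∀ x : ℝ, 0 < x → 0 < Real.Gamma x := fun x hx => Real.Gamma_pos_of_pos hx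
  have hbpos : ∀ n : ℕ, 0 < b n := by
    intro n
    have h1 : 0 < Real.Gamma (2*μ + n + 1) := hΓpos _ (by positivity)
    have h2 : 0 < Real.Gamma (μ + n + 2) := hΓpos _ (by positivity)
    have h3 : 0 < Real.Gamma (μ + n + 3) := hΓpos _ (by positivity)
    have h4 : (0:ℝ) < ((n+1).factorial : ℝ) := by positivity
    rw [hbdef]
    positivity
  -- summability of b via ratio test
  have hb : Summable b := by
    apply summable_of_ratio_norm_eventually_le (r := 1/2) (by norm_num)
    filter_upwards [Filter.eventually_ge_atTop ⌈4 * q^2⌉₊] with n hn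
    have hn' : 4 * q^2 ≤ (n:ℝ) := le_trans (Nat.le_ceil _) (Nat.cast_le.mpr hn)
    have hc : b (n+1) = ((2*μ+n+1) * q^2 / ((μ+n+1)*(n+2)*(μ+n+3))) * b n := by
      have g1 : Real.Gamma (2*μ + ↑(n+1) + 1) = (2*μ+n+1) * Real.Gamma (2*μ + n + 1) := by
        rw [show (2*μ + ↑(n+1) + 1 : ℝ) = (2*μ + n + 1) + 1 by push_cast; ring,
          Real.Gamma_add_one (by positivity)]
      have g2 : Real.Gamma (μ + ↑(n+1) + 2) = (μ+n+2) * Real.Gamma (μ + n + 2) := by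
        rw [show (μ + ↑(n+1) + 2 : ℝ) = (μ + n + 2) + 1 by push_cast; ring,
          Real.Gamma_add_one (by positivity),
          show (μ + (n:ℝ) + 2 : ℝ) = μ + n + 2 by ring]
      have g3 : Real.Gamma (μ + ↑(n+1) + 3) = (μ+n+3) * Real.Gamma (μ + n + 3) := by
        rw [show (μ + ↑(n+1) + 3 : ℝ) = (μ + n + 3) + 1 by push_cast; ring,
          Real.Gamma_add_one (by positivity)]
      have g4 : (((n+1)+1).factorial : ℝ) = (n+2) * ((n+1).factorial : ℝ) := by
        rw [Nat.factorial_succ]; push_cast; ring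
      have h1 : 0 < Real.Gamma (2*μ + n + 1) := hΓpos _ (by positivity)
      have h2 : 0 < Real.Gamma (μ + n + 2) := hΓpos _ (by positivity)
      have h3 : 0 < Real.Gamma (μ + n + 3) := hΓpos _ (by positivity)
      have h4 : (0:ℝ) < ((n+1).factorial : ℝ) := by positivity
      rw [hbdef]
      simp only
      rw [g1, g3, g4]
      rw [show (μ + ↑(n+1) + 1 : ℝ) = μ + n + 2 by push_cast; ring]
      rw [show Real.Gamma (μ + ↑(n+1) + 2) = (μ+n+2) * Real.Gamma (μ + n + 2) from g2]
      field_simp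
      ring
    have hr : (2*μ+n+1) * q^2 / ((μ+n+1)*(n+2)*(μ+n+3)) ≤ 1/2 := by
      rw [div_le_iff₀ (by positivity)]
      have s1 : (2*μ+(n:ℝ)+1)*q^2 ≤ 2*(μ+(n:ℝ)+1)*q^2 :=
        mul_le_mul_of_nonneg_right (by linarith [Nat.cast_nonneg (α := ℝ) n]) (sq_nonneg q)
      have s2 : 4*q^2*(μ+(n:ℝ)+1) ≤ ((n:ℝ)+2)*(μ+(n:ℝ)+1) :=
        mul_le_mul_of_nonneg_right (by linarith) (by positivity)
      have s3 : ((n:ℝ)+2)*(μ+(n:ℝ)+1) ≤ ((n:ℝ)+2)*(μ+(n:ℝ)+1)*(μ+(n:ℝ)+3) :=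
        le_mul_of_one_le_right (by positivity) (by linarith [Nat.cast_nonneg (α := ℝ) n])
      nlinarith [s1, s2, s3]
    rw [Real.norm_eq_abs, Real.norm_eq_abs, abs_of_pos (hbpos _), abs_of_pos (hbpos _), hc]
    exact mul_le_mul_of_nonneg_right hr (hbpos n).le
  -- comparison
  set C : ℝ := q ^ (2*μ+3 : ℝ) * E^2 with hCdef
  apply Summable.of_nonneg_of_le (fun n => abs_nonneg _) _ (hb.mul_left C)
  intro n
  have h1 : 0 < Real.Gamma (2*μ + n + 1) := hΓpos _ (by positivity)
  have h2 : 0 < Real.Gamma (μ + n + 2) := hΓpos _ (by positivity)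
  have h3 : 0 < Real.Gamma (μ + n + 3) := hΓpos _ (by positivity)
  have hf : (0:ℝ) < ((n+1).factorial : ℝ) := by positivity
  have hI1 : besselI (μ + (n:ℝ) + 1) y ≤ q ^ (μ+(n:ℝ)+1 : ℝ) / Real.Gamma (μ+(n:ℝ)+2) * E := by
    have := besselI_le (ν := μ + (n:ℝ) + 1) (by positivity) hy
    rwa [← hqdef, ← hEdef, show (μ+(n:ℝ)+1+1 : ℝ) = μ+(n:ℝ)+2 by ring] at this
  have hI2 : besselI (μ + (n:ℝ) + 1 + 1) y ≤ q ^ (μ+(n:ℝ)+2 : ℝ) / Real.Gamma (μ+(n:ℝ)+3) * E := by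
    have := besselI_le (ν := μ + (n:ℝ) + 2) (by positivity) hy
    rw [← hqdef, ← hEdef, show (μ+(n:ℝ)+2+1 : ℝ) = μ+(n:ℝ)+3 by ring] at this
    rwa [show (μ+(n:ℝ)+1+1 : ℝ) = μ+(n:ℝ)+2 by ring]
  have hI1n : 0 ≤ besselI (μ + (n:ℝ) + 1) y := besselI_nonneg (by positivity) hy
  have hI2n : 0 ≤ besselI (μ + (n:ℝ) + 1 + 1) y := besselI_nonneg (by positivity) hy
  have habs : |zetaCoef μ (n+1) y| =
      (μ + (n:ℝ) + 1) * Real.Gamma (2*μ + (n:ℝ) + 1) * besselI (μ + (n:ℝ) + 1) y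
        * besselI (μ + (n:ℝ) + 1 + 1) y / (((n+1).factorial : ℝ)) := by
    rw [zetaCoef, if_neg (by simp),
      show (μ + ((n+1:ℕ):ℝ) : ℝ) = μ + (n:ℝ) + 1 by push_cast; ring,
      show (2*μ + ((n+1:ℕ):ℝ) : ℝ) = 2*μ + (n:ℝ) + 1 by push_cast; ring]
    rw [abs_div, abs_mul, abs_mul, abs_mul, abs_mul, abs_pow, abs_neg, abs_one, one_pow,
      one_mul, abs_of_nonneg (by positivity : (0:ℝ) ≤ μ + (n:ℝ) + 1), abs_of_pos h1,
      abs_of_nonneg hI1n, abs_of_nonneg hI2n, Nat.abs_cast]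
  rw [habs]
  calc (μ + (n:ℝ) + 1) * Real.Gamma (2*μ + (n:ℝ) + 1) * besselI (μ + (n:ℝ) + 1) y
        * besselI (μ + (n:ℝ) + 1 + 1) y / (((n+1).factorial : ℝ))
      ≤ (μ + (n:ℝ) + 1) * Real.Gamma (2*μ + (n:ℝ) + 1)
          * (q ^ (μ+(n:ℝ)+1 : ℝ) / Real.Gamma (μ+(n:ℝ)+2) * E)
          * (q ^ (μ+(n:ℝ)+2 : ℝ) / Real.Gamma (μ+(n:ℝ)+3) * E) / (((n+1).factorial : ℝ)) := by
        gcongr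
    _ = C * b n := by
        have hqpow : q ^ (μ+(n:ℝ)+1 : ℝ) * q ^ (μ+(n:ℝ)+2 : ℝ)
            = q ^ (2*μ+3 : ℝ) * (q^2)^n := by
          rw [← Real.rpow_add hq, ← Real.rpow_natCast (q^2) n, ← Real.rpow_natCast q 2,
            ← Real.rpow_mul hq.le, ← Real.rpow_add hq]
          ring_nf
        calc (μ + (n:ℝ) + 1) * Real.Gamma (2*μ + (n:ℝ) + 1)
              * (q ^ (μ+(n:ℝ)+1 : ℝ) / Real.Gamma (μ+(n:ℝ)+2) * E)
              * (q ^ (μ+(n:ℝ)+2 : ℝ) / Real.Gamma (μ+(n:ℝ)+3) * E) / (((n+1).factorial : ℝ))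
            = (q ^ (μ+(n:ℝ)+1 : ℝ) * q ^ (μ+(n:ℝ)+2 : ℝ)) * E^2
              * ((μ + (n:ℝ) + 1) * Real.Gamma (2*μ + (n:ℝ) + 1)
                / (((n+1).factorial : ℝ) * Real.Gamma (μ+(n:ℝ)+2) * Real.Gamma (μ+(n:ℝ)+3))) := by
              field_simp
          _ = (q ^ (2*μ+3 : ℝ) * (q^2)^n) * E^2
              * ((μ + (n:ℝ) + 1) * Real.Gamma (2*μ + (n:ℝ) + 1)
                / (((n+1).factorial : ℝ) * Real.Gamma (μ+(n:ℝ)+2) * Real.Gamma (μ+(n:ℝ)+3))) := by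
              rw [hqpow]
          _ = C * b n := by
              rw [hCdef, hbdef]
              field_simp
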